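/- In the automaton group of automaton 861, the element c has infinite order. (One has c(010) = 010 and c|_{010} = c, while c^n(1^∞) ∼ 1^∞ for all n ≥ 0 but c^{-1}(1^∞) = (10)^∞, which is not shift-equivalent via the required form.) -/

import Mathlib

namespace Stmt5


/-- A Mealy automaton over the binary alphabet with state set `S`. -/
structure Mealy (S : Type) where
  /-- transition function -/
  δ : S → Bool → S
  /-- output function -/
  τ : S → Bool → Bool

namespace Mealy

variable {S : Type} (M : Mealy S)

/-- The state reached from `q` after reading the first `n` letters of `w`. -/
def stateAt (q : S) (w : ℕ → Bool) : ℕ → S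
  | 0 => q
  | n + 1 => M.δ (stateAt q w n) (w n)

/-- The action of state `q` on infinite words. -/
def act (q : S) (w : ℕ → Bool) : ℕ → Bool :=
  fun n => M.τ (M.stateAt q w n) (w n)

/-- The inverse automaton (for automata whose output functions are involutions). -/
def inv : Mealy S := ⟨fun q b => M.δ q (M.τ q b), M.τ⟩

theorem stateAt_inv_act (h : ∀ q b, M.τ q (M.τ q b) = b) (q : S) (w : ℕ → Bool) :
    ∀ n, M.inv.stateAt q (M.act q w) n = M.stateAt q w n := by
  intro n
  induction n with
  | zero => rfl
  | succ n ih =>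
    show M.inv.δ (M.inv.stateAt q (M.act q w) n) (M.act q w n) = M.δ (M.stateAt q w n) (w n)
    rw [ih]
    show M.δ (M.stateAt q w n) (M.τ (M.stateAt q w n) (M.τ (M.stateAt q w n) (w n))) = _
    rw [h]

theorem inv_act (h : ∀ q b, M.τ q (M.τ q b) = b) (q : S) (w : ℕ → Bool) :
    M.inv.act q (M.act q w) = w := by
  funext n
  show M.inv.τ (M.inv.stateAt q (M.act q w) n) (M.act q w n) = w n
  rw [stateAt_inv_act M h]
  show M.τ (M.stateAt q w n) (M.τ (M.stateAt q w n) (w n)) = w n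
  rw [h]

theorem inv_inv (h : ∀ q b, M.τ q (M.τ q b) = b) : M.inv.inv = M := by
  obtain ⟨d, t⟩ := M
  simp only [inv]
  congr 1
  funext q b
  exact congrArg (d q) (h q b)

/-- The permutation of the set of infinite binary words defined by state `q`. -/
def perm (h : ∀ q b, M.τ q (M.τ q b) = b) (q : S) : Equiv.Perm (ℕ → Bool) where
  toFun := M.act q
  invFun := M.inv.act q
  left_inv := fun w => M.inv_act h q w
  right_inv := fun w => by
    have h2 : ∀ q b, M.inv.τ q (M.inv.τ q b) = b := h
    have := M.inv.inv_act h2 q w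
    rwa [M.inv_inv h] at this

end Mealy

/-- Prepend a finite word to an infinite word. -/
def cat (u : List Bool) (w : ℕ → Bool) : ℕ → Bool :=
  fun n => u.getD n (w (n - u.length))

/-- The (semantic) restriction of a transformation of infinite words to the
subtree indexed by the finite word `u`. -/
def resW (f : (ℕ → Bool) → ℕ → Bool) (u : List Bool) : (ℕ → Bool) → ℕ → Bool :=
  fun w n => f (cat u w) (n + u.length)

/-- The periodic infinite word with period `u`. -/
def per (u : List Bool) : ℕ → Bool := fun n => u.getD (n % u.length) false

/-- Left-shift equivalence of infinite words: they share a common infinite tail. -/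
def seq (u v : ℕ → Bool) : Prop := ∃ k l : ℕ, ∀ n, u (n + k) = v (n + l)

inductive St : Type
  | a | b | c
deriving DecidableEq

instance : Fintype St :=
  ⟨⟨↑[St.a, St.b, St.c], by decide⟩, fun x => by cases x <;> decide⟩

/-- Automaton 861. -/
def M : Mealy St where
  δ := fun q x => match q, x with
    | .a, false => .c | .a, true => .b
    | .b, false => .c | .b, true => .b
    | .c, false => .b | .c, true => .a
  τ := fun q x => match q with
    | .a => !x
    | .b => x
    | .c => x

theorem M_inv : ∀ q x, M.τ q (M.τ q x) = x := by decide

/-- The automorphism of the binary tree boundary defined by state `a`. -/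
def a : Equiv.Perm (ℕ → Bool) := M.perm M_inv .a

/-- The automorphism of the binary tree boundary defined by state `b`. -/
def b : Equiv.Perm (ℕ → Bool) := M.perm M_inv .b

/-- The automorphism of the binary tree boundary defined by state `c`. -/
def c : Equiv.Perm (ℕ → Bool) := M.perm M_inv .c

lemma c_apply (w : ℕ → Bool) : ⇑c w = M.act .c w := rfl

lemma cat3_high (x y z : Bool) (w : ℕ → Bool) (n : ℕ) :
    cat [x, y, z] w (n + 3) = w n := by
  simp [cat, List.getD]

lemma stateAt_cat010 (w : ℕ → Bool) :
    ∀ n, M.stateAt .c (cat [false, true, false] w) (n + 3) = M.stateAt .c w n := by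
  intro n
  induction n with
  | zero => rfl
  | succ n ih =>
    show M.δ (M.stateAt .c (cat [false, true, false] w) (n + 3))
        (cat [false, true, false] w (n + 3)) = M.δ (M.stateAt .c w n) (w n)
    rw [ih, cat3_high]

lemma part1 (w : ℕ → Bool) :
    c (cat [false, true, false] w) = cat [false, true, false] (c w) := by
  funext n
  match n with
  | 0 => rfl
  | 1 => rfl
  | 2 => rfl
  | m + 3 =>
    show M.τ (M.stateAt .c (cat [false, true, false] w) (m + 3))
        (cat [false, true, false] w (m + 3)) = cat [false, true, false] (M.act .c w) (m + 3)
    rw [stateAt_cat010, cat3_high, cat3_high]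
    rfl

/-- Eventually all true. -/
def Ev (u : ℕ → Bool) : Prop := ∃ k, ∀ m, k ≤ m → u m = true

lemma stateAt_b (q : St) (u : ℕ → Bool) (k : ℕ) (hk : ∀ m, k ≤ m → u m = true) :
    ∀ j, M.stateAt q u (k + 2 + j) = .b := by
  intro j
  induction j with
  | zero =>
    show M.δ (M.δ (M.stateAt q u k) (u k)) (u (k + 1)) = .b
    rw [hk k le_rfl, hk (k + 1) (by omega)]
    cases M.stateAt q u k <;> rfl
  | succ j ih =>
    show M.δ (M.stateAt q u (k + 2 + j)) (u (k + 2 + j)) = .b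
    rw [ih, hk _ (by omega)]
    rfl

lemma ev_act (q : St) (u : ℕ → Bool) (h : Ev u) : Ev (M.act q u) := by
  obtain ⟨k, hk⟩ := h
  refine ⟨k + 2, fun m hm => ?_⟩
  obtain ⟨j, rfl⟩ : ∃ j, m = k + 2 + j := ⟨m - (k + 2), by omega⟩
  show M.τ (M.stateAt q u (k + 2 + j)) (u (k + 2 + j)) = true
  rw [stateAt_b q u k hk j, hk _ (by omega)]
  rfl

lemma part2 : ∀ n : ℕ, Ev (⇑(c ^ n) (fun _ => true)) := by
  intro n
  induction n with
  | zero => exact ⟨0, fun m _ => rfl⟩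
  | succ n ih =>
    have : ⇑(c ^ (n + 1)) (fun _ => true) = c (⇑(c ^ n) (fun _ => true)) := by
      rw [pow_succ']
      rfl
    rw [this]
    exact ev_act .c _ ih

lemma per_even (n : ℕ) : per [true, false] (2 * n) = true := by
  simp [per, Nat.mul_mod_right]

lemma per_odd (n : ℕ) : per [true, false] (2 * n + 1) = false := by
  have h : (2 * n + 1) % 2 = 1 := by omega
  simp [per, h]

lemma stateAt_per : ∀ n : ℕ, M.stateAt .c (per [true, false]) (2 * n) = .c ∧
    M.stateAt .c (per [true, false]) (2 * n + 1) = .a := by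
  intro n
  induction n with
  | zero =>
    refine ⟨rfl, ?_⟩
    show M.δ (M.stateAt .c (per [true, false]) 0) (per [true, false] 0) = .a
    rfl
  | succ n ih =>
    have h1 : 2 * (n + 1) = (2 * n + 1) + 1 := by ring
    have hc : M.stateAt .c (per [true, false]) (2 * (n + 1)) = .c := by
      rw [h1]
      show M.δ (M.stateAt .c (per [true, false]) (2 * n + 1)) (per [true, false] (2 * n + 1)) = .c
      rw [ih.2, per_odd]
      rfl
    refine ⟨hc, ?_⟩
    show M.δ (M.stateAt .c (per [true, false]) (2 * (n + 1))) (per [true, false] (2 * (n + 1)))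
        = .a
    rw [hc, per_even]
    rfl

lemma c_per : c (per [true, false]) = fun _ => true := by
  funext n
  rcases Nat.even_or_odd n with ⟨m, rfl⟩ | ⟨m, rfl⟩
  · have hm : m + m = 2 * m := by ring
    show M.τ (M.stateAt .c (per [true, false]) (m + m)) (per [true, false] (m + m)) = true
    rw [hm, (stateAt_per m).1, per_even]
    rfl
  · show M.τ (M.stateAt .c (per [true, false]) (2 * m + 1)) (per [true, false] (2 * m + 1)) = true
    rw [(stateAt_per m).2, per_odd]
    rfl

lemma part3 : ⇑c⁻¹ (fun _ => true) = per [true, false] := by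
  rw [← c_per]
  exact Equiv.symm_apply_apply c (per [true, false])

/-- In the automaton group of automaton 861, the element `c` has infinite order.
One has `c(010) = 010` and `c|₀₁₀ = c`, while `cⁿ(1^∞) ∼ 1^∞` for all `n ≥ 0` but
`c⁻¹(1^∞) = (10)^∞`. -/
theorem automaton861_c_infinite_order :
    (∀ w : ℕ → Bool, c (cat [false, true, false] w) = cat [false, true, false] (c w)) ∧
    (∀ n : ℕ, seq (⇑(c ^ n) (fun _ => true)) (fun _ => true)) ∧
    (⇑c⁻¹ (fun _ => true) = per [true, false]) ∧
    (∀ n : ℕ, 1 ≤ n → c ^ n ≠ 1) := by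
  refine ⟨part1, fun n => ?_, part3, fun n hn heq => ?_⟩
  · obtain ⟨k, hk⟩ := part2 n
    exact ⟨k, 0, fun m => hk (m + k) (by omega)⟩
  · have hcin : c⁻¹ = c ^ (n - 1) := by
      refine inv_eq_of_mul_eq_one_right ?_
      rw [← pow_succ']
      have : n - 1 + 1 = n := by omega
      rw [this, heq]
    have h1 : per [true, false] = ⇑(c ^ (n - 1)) (fun _ => true) := by
      rw [← hcin, part3]
    obtain ⟨k, hk⟩ := part2 (n - 1)
    have h2 := hk (2 * k + 1) (by omega)
    rw [← h1, per_odd] at h2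
    exact Bool.false_ne_true h2

end Stmt5
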